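/- arXiv:2211.02365 — 4 statements merged into one kernel-verified Lean document; each statement's English description precedes it below -/
import Mathlib

section
/- If θ is an irrational real number, then for real numbers z, x, y, the inequality z - x·cos(2πnθ) - y·sin(2πnθ) ≥ 0 holds for all natural numbers n if and only if z ≥ √(x² + y²). -/
open Real

/-- Step lemma: multiples of a small positive step reach every real mod 1 within δ. -/
lemma step_lemma {δ η : ℝ} (hδ : 0 < δ) (h0 : 0 < η) (h1 : η < δ) (s : ℝ) :
    ∃ m : ℕ, ∃ k : ℤ, |m * η - k - s| < δ := by
  set s' := Int.fract s with hs'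
  refine ⟨⌈s' / η⌉₊, -⌊s⌋, ?_⟩
  have hs'0 : 0 ≤ s' := Int.fract_nonneg s
  have hm1 : s' / η ≤ (⌈s' / η⌉₊ : ℝ) := Nat.le_ceil _
  have hm2 : ((⌈s' / η⌉₊ : ℕ) : ℝ) < s' / η + 1 :=
    Nat.ceil_lt_add_one (by positivity)
  have h3 : s' ≤ (⌈s' / η⌉₊ : ℝ) * η := by
    rw [← div_le_iff₀ h0]; exact hm1
  have h4 : (⌈s' / η⌉₊ : ℝ) * η < s' + η := by
    have h := mul_lt_mul_of_pos_right hm2 h0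
    calc (⌈s' / η⌉₊ : ℝ) * η < (s' / η + 1) * η := h
      _ = s' + η := by field_simp
  have hfra : s' = s - ⌊s⌋ := by rw [hs', Int.self_sub_floor]
  have heq : (⌈s' / η⌉₊ : ℝ) * η - ((-⌊s⌋ : ℤ) : ℝ) - s = (⌈s' / η⌉₊ : ℝ) * η - s' := by
    push_cast; rw [hfra]; ring
  rw [heq, abs_lt]
  constructor <;> nlinarith

/-- Density of natural multiples of an irrational mod 1. -/
lemma nat_dense (θ : ℝ) (hθ : Irrational θ) {δ : ℝ} (hδ : 0 < δ) (t : ℝ) :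
    ∃ n : ℕ, ∃ k : ℤ, |n * θ - k - t| < δ := by
  obtain ⟨N, hN⟩ := exists_nat_gt (1 / δ)
  have hN0 : 0 < N := by
    rcases Nat.eq_zero_or_pos N with h | h
    · exfalso; rw [h] at hN; simp at hN; nlinarith [one_div_pos.mpr hδ]
    · exact h
  have hN0' : (0 : ℝ) < N := by exact_mod_cast hN0
  have hNδ : 1 / (N : ℝ) < δ := by
    rw [div_lt_iff₀ hN0']
    rw [div_lt_iff₀ hδ] at hN
    nlinarith
  -- pigeonhole on buckets
  have hmaps : ∀ i ∈ Finset.range (N + 1),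
      (⌊(N : ℝ) * Int.fract (i * θ)⌋).toNat ∈ Finset.range N := by
    intro i _
    have h2 : (N : ℝ) * Int.fract (i * θ) < N := by
      nlinarith [Int.fract_lt_one ((i : ℝ) * θ)]
    have h3 : ⌊(N : ℝ) * Int.fract (i * θ)⌋ < (N : ℤ) := by
      exact Int.floor_lt.mpr (by exact_mod_cast h2)
    rw [Finset.mem_range]; omega
  obtain ⟨a, ha, b, hb, hab, hfab⟩ :=
    Finset.exists_ne_map_eq_of_card_lt_of_maps_to
      (by simp : (Finset.range N).card < (Finset.range (N + 1)).card) hmaps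
  -- floors are equal
  have hfl : ∀ i : ℕ, 0 ≤ ⌊(N : ℝ) * Int.fract (i * θ)⌋ := fun i =>
    Int.floor_nonneg.mpr (mul_nonneg (le_of_lt hN0') (Int.fract_nonneg _))
  have hfeq : ⌊(N : ℝ) * Int.fract (a * θ)⌋ = ⌊(N : ℝ) * Int.fract (b * θ)⌋ := by
    have := hfl a; have := hfl b; omega
  have habs : |(N : ℝ) * Int.fract (a * θ) - (N : ℝ) * Int.fract (b * θ)| < 1 :=
    Int.abs_sub_lt_one_of_floor_eq_floor hfeq
  have hsmall : |Int.fract (b * θ) - Int.fract (a * θ)| < δ := by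
    rw [abs_sub_comm, ← mul_sub, abs_mul, abs_of_pos hN0'] at habs
    have : |Int.fract (b * θ) - Int.fract (a * θ)| < 1 / N := by
      rw [lt_div_iff₀ hN0']; nlinarith
    linarith
  -- main construction (by symmetry in a, b, assume a < b)
  clear hfeq habs ha hb hmaps hfab
  wlog hlt : a < b generalizing a b
  · exact this b a hab.symm (by rwa [abs_sub_comm]) (by omega)
  set η : ℝ := Int.fract (b * θ) - Int.fract (a * θ) with hη
  set K : ℤ := ⌊(b : ℝ) * θ⌋ - ⌊(a : ℝ) * θ⌋ with hK
  have hηval : η = ((b - a : ℕ) : ℝ) * θ - K := by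
    rw [hη, hK, Int.fract, Int.fract]
    push_cast [Nat.cast_sub hlt.le]
    ring
  have hηne : η ≠ 0 := by
    intro h
    have : ((b - a : ℕ) : ℝ) * θ = (K : ℝ) := by
      rw [hηval] at h; linarith
    exact (hθ.natCast_mul (by omega)).ne_int K this
  have hbaθ : ((b : ℝ) - a) * θ = η + K := by
    rw [hηval]; push_cast [Nat.cast_sub hlt.le]; ring
  rcases hηne.lt_or_gt with hneg | hpos
  · -- η < 0 : use step -η with target -t
    have habsδ := abs_lt.mp hsmall
    obtain ⟨m, k, hk⟩ := step_lemma hδ (by linarith : (0:ℝ) < -η) (by linarith) (-t)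
    refine ⟨m * (b - a), m * K - k, ?_⟩
    have e : ((m * (b - a) : ℕ) : ℝ) * θ - ((m * K - k : ℤ) : ℝ) - t
        = -((m : ℝ) * (-η) - (k : ℝ) - (-t)) := by
      push_cast [Nat.cast_sub hlt.le]
      linear_combination (m : ℝ) * hbaθ
    rw [e, abs_neg]; exact hk
  · -- η > 0
    have habsδ := abs_lt.mp hsmall
    obtain ⟨m, k, hk⟩ := step_lemma hδ hpos (by linarith) t
    refine ⟨m * (b - a), m * K + k, ?_⟩
    have e : ((m * (b - a) : ℕ) : ℝ) * θ - ((m * K + k : ℤ) : ℝ) - t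
        = (m : ℝ) * η - (k : ℝ) - t := by
      push_cast [Nat.cast_sub hlt.le]
      linear_combination (m : ℝ) * hbaθ
    rw [e]; exact hk

theorem stmt_1 (θ : ℝ) (hθ : Irrational θ) (z x y : ℝ) :
    (∀ n : ℕ, z - x * Real.cos (2 * π * n * θ) - y * Real.sin (2 * π * n * θ) ≥ 0) ↔
      z ≥ Real.sqrt (x ^ 2 + y ^ 2) := by
  set r : ℝ := Real.sqrt (x ^ 2 + y ^ 2) with hr
  have hr0 : 0 ≤ r := Real.sqrt_nonneg _
  have hr2 : r ^ 2 = x ^ 2 + y ^ 2 := Real.sq_sqrt (by positivity)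
  constructor
  · intro h
    by_contra hzr
    push_neg at hzr
    -- from n = 0 : z ≥ x
    have h0 := h 0
    simp at h0
    rcases eq_or_lt_of_le hr0 with hreq | hrpos
    · -- r = 0 ⇒ x = y = 0 ⇒ z ≥ 0 = r
      have hx : x = 0 := by nlinarith
      rw [hx] at h0
      exact absurd h0 (by linarith)
    · -- r > 0, use the phase φ = arg (x + y i)
      set w : ℂ := ⟨x, y⟩ with hw
      have hwne : w ≠ 0 := by
        intro hc
        rw [Complex.ext_iff] at hc
        simp [hw] at hc
        nlinarith [hc.1, hc.2]
      have habsw : ‖w‖ = r := by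
        rw [Complex.norm_def, Complex.normSq_mk]
        rw [hr]; ring_nf
      set φ : ℝ := Complex.arg w with hφ
      have hcos : Real.cos φ = x / r := by
        rw [hφ, Complex.cos_arg hwne, habsw]
      have hsin : Real.sin φ = y / r := by
        rw [hφ, Complex.sin_arg, habsw]
      have hx : x = r * Real.cos φ := by rw [hcos]; field_simp
      have hy : y = r * Real.sin φ := by rw [hsin]; field_simp
      -- continuity of cos at 0: pick δ with |u| < δ → cos u > z / r
      have hε : (0:ℝ) < 1 - z / r := by
        rw [sub_pos, div_lt_one hrpos]; exact hzr
      have hcont : ContinuousAt Real.cos 0 := Real.continuous_cos.continuousAt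
      rw [Metric.continuousAt_iff] at hcont
      obtain ⟨δ, hδ0, hδ⟩ := hcont (1 - z / r) hε
      have hπ : (0:ℝ) < 2 * π := by positivity
      obtain ⟨n, k, hnk⟩ := nat_dense θ hθ (div_pos hδ0 hπ) (φ / (2 * π))
      -- |2πnθ - 2πk - φ| < δ
      have h2 : |2 * π * n * θ - 2 * π * k - φ| < δ := by
        have : 2 * π * n * θ - 2 * π * k - φ = (2 * π) * ((n : ℝ) * θ - k - φ / (2 * π)) := by
          field_simp
        rw [this, abs_mul, abs_of_pos hπ]
        calc 2 * π * |(n : ℝ) * θ - k - φ / (2 * π)| < 2 * π * (δ / (2 * π)) := by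
              exact mul_lt_mul_of_pos_left hnk hπ
          _ = δ := by field_simp
      have hcosval : Real.cos (2 * π * n * θ - φ) > z / r := by
        have hper : Real.cos (2 * π * n * θ - φ) = Real.cos (2 * π * n * θ - 2 * π * k - φ) := by
          have : 2 * π * n * θ - φ = (2 * π * n * θ - 2 * π * k - φ) + k * (2 * π) := by ring
          rw [this, Real.cos_add_int_mul_two_pi]
        have := hδ (x := 2 * π * n * θ - 2 * π * k - φ) (by simpa using h2)
        rw [Real.dist_eq, Real.cos_zero] at this
        have := abs_lt.mp this
        rw [hper]; linarith [this.1]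
      -- contradiction with h n
      have hn := h n
      have hval : x * Real.cos (2 * π * n * θ) + y * Real.sin (2 * π * n * θ)
          = r * Real.cos (2 * π * n * θ - φ) := by
        rw [hx, hy, Real.cos_sub]; ring
      have : z ≥ r * Real.cos (2 * π * n * θ - φ) := by
        rw [← hval]; linarith
      nlinarith [mul_lt_mul_of_pos_left hcosval hrpos, div_mul_cancel₀ z (ne_of_gt hrpos)]
  · intro h n
    have key : x * Real.cos (2 * π * n * θ) + y * Real.sin (2 * π * n * θ) ≤ r := by
      nlinarith [sq_nonneg (x * Real.sin (2 * π * n * θ) - y * Real.cos (2 * π * n * θ)),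
        Real.sin_sq_add_cos_sq (2 * π * n * θ),
        sq_nonneg (r - (x * Real.cos (2 * π * n * θ) + y * Real.sin (2 * π * n * θ)))]
    linarith
end

section
/- Let θ be irrational and let vₙ(z,x,y,z',x',y') = z - x·cos(2πnθ) - y·sin(2πnθ) + (z' - x'·cos(2πnθ) - y'·sin(2πnθ))/n for n ≥ 1. If (z, x, y, z', x', y') is such that vₙ ≥ 0 for all n ≥ 1, then z ≥ √(x² + y²). -/
open Real

/-- The subgroup `ℤθ + ℤ` of `ℝ`. -/
def intCombSubgroup (θ : ℝ) : AddSubgroup ℝ where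
  carrier := {u : ℝ | ∃ k m : ℤ, u = k * θ + m}
  zero_mem' := ⟨0, 0, by simp⟩
  add_mem' := by
    rintro a b ⟨k, m, rfl⟩ ⟨k', m', rfl⟩
    exact ⟨k + k', m + m', by push_cast; ring⟩
  neg_mem' := by
    rintro a ⟨k, m, rfl⟩
    exact ⟨-k, -m, by push_cast; ring⟩

/-- For an irrational `θ`, there exist `k ≥ 1` and `m : ℤ` with `0 < |kθ - m| < ε`. -/
lemma exists_small_multiple (θ : ℝ) (hθ : Irrational θ) {ε : ℝ} (hε : 0 < ε) :
    ∃ k : ℕ, 1 ≤ k ∧ ∃ m : ℤ, (k : ℝ) * θ - m ≠ 0 ∧ |(k : ℝ) * θ - m| < ε := by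
  rcases (intCombSubgroup θ).dense_or_cyclic with hd | ⟨a, ha⟩
  · -- dense case
    set ε' : ℝ := min ε 1 with hε'def
    have hε' : 0 < ε' := lt_min hε one_pos
    obtain ⟨g, hgS, hg⟩ := hd.exists_mem_open isOpen_Ioo (Set.nonempty_Ioo.2 hε')
    obtain ⟨k, m, rfl⟩ := hgS
    obtain ⟨hg0, hgε⟩ := hg
    have hgε1 : (k : ℝ) * θ + m < 1 := lt_of_lt_of_le hgε (min_le_right _ _)
    have hgεε : (k : ℝ) * θ + m < ε := lt_of_lt_of_le hgε (min_le_left _ _)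
    rcases lt_trichotomy k 0 with hk | hk | hk
    · have hcast : ((((-k).toNat : ℕ) : ℝ)) = -(k : ℝ) := by
        exact_mod_cast Int.toNat_of_nonneg (show (0:ℤ) ≤ -k by omega)
      refine ⟨(-k).toNat, by omega, m, ?_, ?_⟩
      · rw [hcast]; intro hcontra
        have : (k : ℝ) * θ + m = 0 := by linarith [hcontra]
        exact absurd this (ne_of_gt hg0)
      · rw [hcast]
        have : -(k : ℝ) * θ - m = -((k : ℝ) * θ + m) := by ring
        rw [this, abs_neg, abs_of_pos hg0]
        exact hgεε
    · exfalso
      subst hk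
      simp only [Int.cast_zero, zero_mul, zero_add] at hg0 hgε1
      have : (1 : ℤ) ≤ m := by exact_mod_cast Int.cast_pos.mp hg0
      have : (1 : ℝ) ≤ (m : ℝ) := by exact_mod_cast this
      linarith
    · have hcast : (((k.toNat : ℕ) : ℝ)) = (k : ℝ) := by
        exact_mod_cast Int.toNat_of_nonneg (show (0:ℤ) ≤ k by omega)
      refine ⟨k.toNat, by omega, -m, ?_, ?_⟩
      · rw [hcast]; intro hcontra
        have : (k : ℝ) * θ + m = 0 := by push_cast at hcontra ⊢; linarith
        exact absurd this (ne_of_gt hg0)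
      · rw [hcast]
        have : (k : ℝ) * θ - (((-m : ℤ) : ℝ)) = (k : ℝ) * θ + m := by push_cast; ring
        rw [this, abs_of_pos hg0]
        exact hgεε
  · -- cyclic case: contradiction with irrationality
    exfalso
    have hθS : θ ∈ intCombSubgroup θ := ⟨1, 0, by simp⟩
    have h1S : (1 : ℝ) ∈ intCombSubgroup θ := ⟨0, 1, by simp⟩
    rw [ha, AddSubgroup.mem_closure_singleton] at hθS h1S
    obtain ⟨p, hp⟩ := hθS
    obtain ⟨q, hq⟩ := h1S
    rw [zsmul_eq_mul] at hp hq
    have hq0 : (q : ℝ) ≠ 0 := by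
      intro hq0
      rw [hq0, zero_mul] at hq
      exact one_ne_zero hq.symm
    have hqz : q ≠ 0 := by exact_mod_cast hq0
    apply hθ
    refine ⟨(p : ℚ) / (q : ℚ), ?_⟩
    have : θ = (p : ℝ) / (q : ℝ) := by
      field_simp
      calc θ * q = (p * a) * q := by rw [hp]
        _ = p * (q * a) := by ring
        _ = p := by rw [hq, mul_one]
    rw [this]
    push_cast
    ring

/-- Density of the forward orbit of an irrational rotation: for any target `t`, `ε > 0` and
threshold `N`, there is `n ≥ max N 1` and `M : ℤ` with `|nθ - M - t| < ε`. -/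
lemma exists_orbit_close (θ : ℝ) (hθ : Irrational θ) (t : ℝ) {ε : ℝ} (hε : 0 < ε) (N : ℕ) :
    ∃ n : ℕ, N ≤ n ∧ 1 ≤ n ∧ ∃ M : ℤ, |(n : ℝ) * θ - M - t| < ε := by
  obtain ⟨k, hk1, m, hβ0, hβε⟩ := exists_small_multiple θ hθ hε
  set β : ℝ := (k : ℝ) * θ - m with hβdef
  set K : ℕ := max N 1 with hKdef
  have hK1 : 1 ≤ K := le_max_right _ _
  have hKN : N ≤ K := le_max_left _ _
  -- choose an integer m' so that s := t + m' satisfies s / β ≥ K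
  have hm' : ∃ m' : ℤ, (K : ℝ) ≤ (t + m') / β := by
    rcases Ne.lt_or_gt hβ0 with hβneg | hβpos
    · refine ⟨⌊(K : ℝ) * β - t⌋, ?_⟩
      rw [le_div_iff_of_neg hβneg]
      have := Int.floor_le ((K : ℝ) * β - t)
      linarith
    · refine ⟨⌈(K : ℝ) * β - t⌉, ?_⟩
      rw [le_div_iff₀ hβpos]
      have := Int.le_ceil ((K : ℝ) * β - t)
      linarith
  obtain ⟨m', hm'⟩ := hm'
  set s : ℝ := t + m' with hsdef
  set j : ℤ := ⌊s / β⌋ with hjdef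
  have hjK : (K : ℤ) ≤ j := by
    rw [hjdef]
    exact Int.le_floor.2 (by exact_mod_cast hm')
  have hj1 : 1 ≤ j := le_trans (by exact_mod_cast hK1) hjK
  -- `|jβ - s| < |β| < ε`
  have hfloor : |s / β - j| < 1 := by
    rw [abs_sub_lt_iff]
    constructor
    · linarith [Int.lt_floor_add_one (s / β)]
    · linarith [Int.floor_le (s / β)]
  have hclose : |(j : ℝ) * β - s| < ε := by
    have h1 : (j : ℝ) * β - s = -((s / β - j) * β) := by field_simp; ring
    rw [h1, abs_neg, abs_mul]
    calc |s / β - (j : ℝ)| * |β| < 1 * |β| := by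
          apply mul_lt_mul_of_pos_right hfloor (abs_pos.2 hβ0)
      _ = |β| := one_mul _
      _ < ε := hβε
  refine ⟨(j * k).toNat, ?_, ?_, j * m + m', ?_⟩
  · have : (N : ℤ) ≤ j * k := by
      calc (N : ℤ) ≤ (K : ℤ) := by exact_mod_cast hKN
        _ ≤ j := hjK
        _ = j * 1 := (mul_one j).symm
        _ ≤ j * k := by
            apply mul_le_mul_of_nonneg_left _ (by omega)
            exact_mod_cast hk1
    omega
  · have : (1 : ℤ) ≤ j * k := by
      have hk1' : (1 : ℤ) ≤ (k : ℤ) := by exact_mod_cast hk1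
      nlinarith
    omega
  · have hcast : (((j * k).toNat : ℕ) : ℝ) = (j : ℝ) * k := by
      have hjk : (0 : ℤ) ≤ j * k := by positivity
      exact_mod_cast Int.toNat_of_nonneg hjk
    rw [hcast]
    have : (j : ℝ) * k * θ - ((j * m + m' : ℤ) : ℝ) - t = (j : ℝ) * β - s := by
      rw [hβdef, hsdef]; push_cast; ring
    rw [this]
    exact hclose

set_option maxHeartbeats 1000000 in
theorem stmt_7 (θ : ℝ) (hθ : Irrational θ) (z x y z' x' y' : ℝ)
    (h : ∀ n : ℕ, 1 ≤ n →
      z - x * Real.cos (2 * π * n * θ) - y * Real.sin (2 * π * n * θ) +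
          (z' - x' * Real.cos (2 * π * n * θ) - y' * Real.sin (2 * π * n * θ)) / n ≥ 0) :
    z ≥ Real.sqrt (x ^ 2 + y ^ 2) := by
  set r : ℝ := Real.sqrt (x ^ 2 + y ^ 2) with hr
  have hr0 : 0 ≤ r := Real.sqrt_nonneg _
  -- polar decomposition
  set w : ℂ := (x : ℂ) + (y : ℂ) * Complex.I with hw
  set φ : ℝ := Complex.arg w with hφ
  have habs : ‖w‖ = r := by
    rw [hw, Complex.norm_def, Complex.normSq_add_mul_I]
  have hwre : w.re = x := by simp [hw]
  have hwim : w.im = y := by simp [hw]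
  have hx : r * Real.cos φ = x := by
    have h1 := Complex.norm_mul_cos_arg w
    rw [habs, hwre] at h1
    exact h1
  have hy : r * Real.sin φ = y := by
    have h1 := Complex.norm_mul_sin_arg w
    rw [habs, hwim] at h1
    exact h1
  set C : ℝ := |z'| + |x'| + |y'| with hC
  have hC0 : 0 ≤ C := by positivity
  -- bound for the residual term
  have hres : ∀ s : ℝ, |z' - x' * Real.cos s - y' * Real.sin s| ≤ C := by
    intro s
    have h1 : |x' * Real.cos s| ≤ |x'| := by
      rw [abs_mul]
      calc |x'| * |Real.cos s| ≤ |x'| * 1 := by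
            apply mul_le_mul_of_nonneg_left (Real.abs_cos_le_one s) (abs_nonneg _)
        _ = |x'| := mul_one _
    have h2 : |y' * Real.sin s| ≤ |y'| := by
      rw [abs_mul]
      calc |y'| * |Real.sin s| ≤ |y'| * 1 := by
            apply mul_le_mul_of_nonneg_left (Real.abs_sin_le_one s) (abs_nonneg _)
        _ = |y'| := mul_one _
    calc |z' - x' * Real.cos s - y' * Real.sin s|
        ≤ |z' - x' * Real.cos s| + |y' * Real.sin s| := abs_sub _ _
      _ ≤ |z'| + |x' * Real.cos s| + |y' * Real.sin s| := by
          have := abs_sub z' (x' * Real.cos s)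
          linarith
      _ ≤ C := by rw [hC]; linarith
  -- the key estimate: z ≥ r cos(2πnθ - φ) - C/n for n ≥ 1
  have hkey : ∀ n : ℕ, 1 ≤ n →
      r * Real.cos (2 * π * n * θ - φ) - C / n ≤ z := by
    intro n hn
    have hn0 : (0 : ℝ) < n := by exact_mod_cast hn
    have hh := h n hn
    have hna : x * Real.cos (2 * π * n * θ) + y * Real.sin (2 * π * n * θ)
        = r * Real.cos (2 * π * n * θ - φ) := by
      rw [Real.cos_sub, ← hx, ← hy]; ring
    have hresn : (z' - x' * Real.cos (2 * π * n * θ)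
        - y' * Real.sin (2 * π * n * θ)) / n ≤ C / n := by
      apply (div_le_div_iff_of_pos_right hn0).2
      exact le_of_abs_le (hres (2 * π * n * θ))
    linarith
  -- conclude: r ≤ z + ε for every ε > 0
  have hclaim : ∀ ε : ℝ, 0 < ε → r ≤ z + ε := by
    intro ε hε
    set D : ℝ := 4 * π ^ 2 * r + 1 with hD
    have hD0 : 0 < D := by positivity
    set δ : ℝ := min 1 (ε / (2 * D)) with hδ
    have hδ0 : 0 < δ := lt_min one_pos (by positivity)
    have hδ1 : δ ≤ 1 := min_le_left _ _
    have hδ2 : δ ≤ ε / (2 * D) := min_le_right _ _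
    set N : ℕ := ⌈2 * C / ε⌉₊ + 1 with hN
    obtain ⟨n, hnN, hn1, M, hM⟩ := exists_orbit_close θ hθ (φ / (2 * π)) hδ0 N
    have hn0 : (0 : ℝ) < n := by exact_mod_cast hn1
    set u : ℝ := (n : ℝ) * θ - M - φ / (2 * π) with hu
    have hπ : (0 : ℝ) < π := Real.pi_pos
    clear_value D δ N u
    have hexpr : 2 * π * n * θ - φ = 2 * π * u + M * (2 * π) := by
      rw [hu]; field_simp; ring
    have hcoseq : Real.cos (2 * π * n * θ - φ) = Real.cos (2 * π * u) := by
      rw [hexpr, Real.cos_add_int_mul_two_pi]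
    have hcosb : 1 - (2 * π * u) ^ 2 / 2 ≤ Real.cos (2 * π * u) :=
      Real.one_sub_sq_div_two_le_cos
    have huδ : |u| ≤ δ := le_of_lt hM
    have hsq : (2 * π * u) ^ 2 ≤ (2 * π * δ) ^ 2 := by
      have h1 : |2 * π * u| ≤ 2 * π * δ := by
        rw [abs_mul, abs_of_pos (by positivity : (0:ℝ) < 2 * π)]
        exact mul_le_mul_of_nonneg_left huδ (by positivity)
      calc (2 * π * u) ^ 2 = |2 * π * u| ^ 2 := (sq_abs _).symm
        _ ≤ (2 * π * δ) ^ 2 := by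
            apply pow_le_pow_left₀ (abs_nonneg _) h1
    -- bound r * (2πδ)^2 / 2 ≤ ε / 2
    have hb1 : r * ((2 * π * δ) ^ 2 / 2) ≤ ε / 2 := by
      have e1 : r * ((2 * π * δ) ^ 2 / 2) = 2 * π ^ 2 * r * δ ^ 2 := by ring
      rw [e1]
      have e2 : 2 * π ^ 2 * r * δ ^ 2 ≤ 2 * π ^ 2 * r * δ := by
        have : δ ^ 2 ≤ δ := by nlinarith
        apply mul_le_mul_of_nonneg_left this (by positivity)
      have e3 : 2 * π ^ 2 * r * δ ≤ D * δ := by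
        apply mul_le_mul_of_nonneg_right _ hδ0.le
        have hpos : 0 ≤ 2 * π ^ 2 * r := by positivity
        rw [hD]; linarith
      have e4 : D * δ ≤ D * (ε / (2 * D)) :=
        mul_le_mul_of_nonneg_left hδ2 hD0.le
      have e5 : D * (ε / (2 * D)) = ε / 2 := by field_simp
      linarith
    -- bound C / n ≤ ε / 2
    have hb2 : C / n ≤ ε / 2 := by
      have hceil : 2 * C / ε ≤ (⌈2 * C / ε⌉₊ : ℝ) := Nat.le_ceil _
      have hNn : (N : ℝ) ≤ (n : ℝ) := by exact_mod_cast hnN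
      have hNval : (2 * C / ε : ℝ) ≤ (n : ℝ) := by
        have : ((⌈2 * C / ε⌉₊ : ℕ) : ℝ) ≤ (N : ℝ) := by
          rw [hN]; push_cast; linarith
        linarith
      rw [div_le_iff₀ hn0]
      have : 2 * C ≤ ε * n := by
        rw [div_le_iff₀ hε] at hNval
        linarith
      linarith
    have hk := hkey n hn1
    have hcosl : 1 - (2 * π * δ) ^ 2 / 2 ≤ Real.cos (2 * π * n * θ - φ) := by
      rw [hcoseq]
      nlinarith [hcosb, hsq]
    have hrc : r * (1 - (2 * π * δ) ^ 2 / 2) ≤ r * Real.cos (2 * π * n * θ - φ) :=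
      mul_le_mul_of_nonneg_left hcosl hr0
    nlinarith
  by_contra hlt
  push_neg at hlt
  have := hclaim ((r - z) / 2) (by linarith)
  linarith
end

section
/- Every point d' = (z, x, y, z', x', y') in the closed ball of radius √2·ψ centered at (2+ψ, 2-ψ, 0, 0, 0, 2πℓ) in ℝ⁶, with 0 < ψ < 1/3, satisfies z ≥ √(x² + y²), with equality exactly at the point (2, 2, 0, 0, 0, 2πℓ). -/
open Real

set_option maxHeartbeats 1600000 in
theorem stmt_9 (ψ ℓ : ℝ) (hψ0 : 0 < ψ) (hψ : ψ < 1 / 3) (hℓ : 0 < ℓ)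
    (d' : Fin 6 → ℝ)
    (hd' : Real.sqrt (∑ i, (d' i - (![2 + ψ, 2 - ψ, 0, 0, 0, 2 * π * ℓ]) i) ^ 2)
      ≤ Real.sqrt 2 * ψ) :
    d' 0 ≥ Real.sqrt ((d' 1) ^ 2 + (d' 2) ^ 2) ∧
    (d' 0 = Real.sqrt ((d' 1) ^ 2 + (d' 2) ^ 2) ↔ d' = ![2, 2, 0, 0, 0, 2 * π * ℓ]) := by
  set z := d' 0 with hz
  set x := d' 1 with hx
  set y := d' 2 with hy
  set p := d' 3 with hp
  set q := d' 4 with hq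
  set w := d' 5 with hw
  have hsum : (z - (2 + ψ)) ^ 2 + (x - (2 - ψ)) ^ 2 + y ^ 2 + p ^ 2 + q ^ 2
      + (w - 2 * π * ℓ) ^ 2 ≤ 2 * ψ ^ 2 := by
    have hS : (0:ℝ) ≤ ∑ i, (d' i - (![2 + ψ, 2 - ψ, 0, 0, 0, 2 * π * ℓ]) i) ^ 2 :=
      Finset.sum_nonneg fun i _ => sq_nonneg _
    have h2 : (∑ i, (d' i - (![2 + ψ, 2 - ψ, 0, 0, 0, 2 * π * ℓ]) i) ^ 2)
        ≤ (Real.sqrt 2 * ψ) ^ 2 := by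
      have := pow_le_pow_left₀ (Real.sqrt_nonneg _) hd' 2
      rwa [Real.sq_sqrt hS] at this
    have hsq2 : (Real.sqrt 2 * ψ) ^ 2 = 2 * ψ ^ 2 := by
      rw [mul_pow, Real.sq_sqrt (by norm_num : (2:ℝ) ≥ 0)]
    rw [hsq2] at h2
    rw [Fin.sum_univ_six] at h2
    simpa using h2
  -- key certificate facts
  have k1 : (0:ℝ) ≤ ψ * (z - 2) ^ 2 := mul_nonneg hψ0.le (sq_nonneg _)
  have k2 : (0:ℝ) ≤ ψ * (x - 2) ^ 2 := mul_nonneg hψ0.le (sq_nonneg _)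
  have k3 : (0:ℝ) ≤ ψ * y ^ 2 := mul_nonneg hψ0.le (sq_nonneg _)
  have hQψ : 0 ≤ ψ * (z ^ 2 - x ^ 2 - y ^ 2) := by
    nlinarith [sq_nonneg (z - 2), sq_nonneg (x - 2), sq_nonneg y, sq_nonneg p, sq_nonneg q, sq_nonneg (w - 2 * π * ℓ)]
  have hQ : x ^ 2 + y ^ 2 ≤ z ^ 2 := by nlinarith [hQψ, hψ0]
  have hzpos : 0 ≤ z := by
    nlinarith [sq_nonneg (z - (2 + ψ)), sq_nonneg (x - (2 - ψ)), sq_nonneg y, sq_nonneg p, sq_nonneg q, sq_nonneg (w - 2 * π * ℓ)]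
  have hmain : Real.sqrt (x ^ 2 + y ^ 2) ≤ z := by
    have := Real.sqrt_le_sqrt hQ
    rwa [Real.sqrt_sq hzpos] at this
  refine ⟨hmain, ?_, ?_⟩
  · intro heq
    have hzz : z ^ 2 = x ^ 2 + y ^ 2 := by
      rw [heq, Real.sq_sqrt (by positivity)]
    have hQ0 : ψ * (z ^ 2 - x ^ 2 - y ^ 2) = 0 := by rw [hzz]; ring
    have hE : (ψ + 2) * (z - 2) ^ 2 + (2 - ψ) * (x - 2) ^ 2 + (2 - ψ) * y ^ 2
        + 2 * (p ^ 2 + q ^ 2 + (w - 2 * π * ℓ) ^ 2)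
        = ψ * (z ^ 2 - x ^ 2 - y ^ 2)
          - 2 * (2 * ψ ^ 2 - ((z - (2 + ψ)) ^ 2 + (x - (2 - ψ)) ^ 2 + y ^ 2
            + p ^ 2 + q ^ 2 + (w - 2 * π * ℓ) ^ 2)) := by ring
    have hzero : (ψ + 2) * (z - 2) ^ 2 + (2 - ψ) * (x - 2) ^ 2 + (2 - ψ) * y ^ 2
        + 2 * (p ^ 2 + q ^ 2 + (w - 2 * π * ℓ) ^ 2) ≤ 0 := by
      rw [hE]
      linarith
    have hA : (0:ℝ) ≤ (ψ + 2) * (z - 2) ^ 2 := by positivity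
    have hB : (0:ℝ) ≤ (2 - ψ) * (x - 2) ^ 2 := mul_nonneg (by linarith) (sq_nonneg _)
    have hC : (0:ℝ) ≤ (2 - ψ) * y ^ 2 := mul_nonneg (by linarith) (sq_nonneg _)
    have hD : (0:ℝ) ≤ p ^ 2 + q ^ 2 + (w - 2 * π * ℓ) ^ 2 := by positivity
    have t1 : (z - 2) ^ 2 = 0 := by linarith only [hzero, hB, hC, hD, sq_nonneg (z - 2), k1]
    have k2' : (0:ℝ) ≤ (1 / 3 - ψ) * (x - 2) ^ 2 := mul_nonneg (by linarith) (sq_nonneg _)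
    have k3' : (0:ℝ) ≤ (1 / 3 - ψ) * y ^ 2 := mul_nonneg (by linarith) (sq_nonneg _)
    have t2 : (x - 2) ^ 2 = 0 := by linarith only [hzero, hA, hC, hD, sq_nonneg (x - 2), k2']
    have t3 : y ^ 2 = 0 := by linarith only [hzero, hA, hB, hD, sq_nonneg y, k3']
    have t4 : p ^ 2 = 0 := by linarith only [hzero, hA, hB, hC, sq_nonneg p, sq_nonneg q, sq_nonneg (w - 2 * π * ℓ)]
    have t5 : q ^ 2 = 0 := by linarith only [hzero, hA, hB, hC, sq_nonneg p, sq_nonneg q, sq_nonneg (w - 2 * π * ℓ)]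
    have t6 : (w - 2 * π * ℓ) ^ 2 = 0 := by linarith only [hzero, hA, hB, hC, sq_nonneg p, sq_nonneg q, sq_nonneg (w - 2 * π * ℓ)]
    have hz2 : z = 2 := by
      have h := pow_eq_zero_iff (n := 2) (by norm_num) |>.mp t1; linarith
    have hx2 : x = 2 := by
      have h := pow_eq_zero_iff (n := 2) (by norm_num) |>.mp t2; linarith
    have hy0 : y = 0 := pow_eq_zero_iff (n := 2) (by norm_num) |>.mp t3
    have hp0 : p = 0 := pow_eq_zero_iff (n := 2) (by norm_num) |>.mp t4
    have hq0 : q = 0 := pow_eq_zero_iff (n := 2) (by norm_num) |>.mp t5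
    have hw0 : w = 2 * π * ℓ := by
      have h := pow_eq_zero_iff (n := 2) (by norm_num) |>.mp t6; linarith
    funext i
    fin_cases i
    · exact hz2
    · exact hx2
    · exact hy0
    · exact hp0
    · exact hq0
    · exact hw0
  · intro heq
    rw [hz, hx, hy, heq]
    norm_num
    rw [show (![2, 2, 0, 0, 0, 2 * π * ℓ] : Fin 6 → ℝ) 2 = 0 from rfl,
      show (4:ℝ) + 0 ^ 2 = 2 ^ 2 by norm_num, Real.sqrt_sq (by norm_num)]
end

section
/- Let (uₙ) be a real sequence of the form uₙ = Σⱼ αⱼ·e^{i n θⱼ} where the αⱼ are complex constants and θⱼ real. Then for all ε > 0, j ∈ ℕ, and N ∈ ℕ, there exists n > N with |uₙ - uⱼ| < ε. -/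
open Complex Filter

private lemma abs_exp_nat_mul (a : ℕ) (x : ℝ) :
    ‖Complex.exp (Complex.I * a * x)‖ = 1 := by
  rw [show Complex.I * (a : ℂ) * (x : ℂ) = ((a * x : ℝ) : ℂ) * Complex.I by push_cast; ring,
    Complex.norm_exp_ofReal_mul_I]

private lemma abs_exp_diff (a b : ℕ) (x : ℝ) :
    ‖Complex.exp (Complex.I * ((a + b : ℕ) : ℂ) * x) - Complex.exp (Complex.I * a * x)‖
      = ‖Complex.exp (Complex.I * b * x) - 1‖ := by
  have h : Complex.I * ((a + b : ℕ) : ℂ) * x = Complex.I * a * x + Complex.I * b * x := by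
    push_cast; ring
  rw [h, Complex.exp_add,
    show Complex.exp (Complex.I * a * x) * Complex.exp (Complex.I * b * x) -
        Complex.exp (Complex.I * a * x)
      = Complex.exp (Complex.I * a * x) * (Complex.exp (Complex.I * b * x) - 1) by ring,
    norm_mul, abs_exp_nat_mul, one_mul]

theorem stmt_16 (k : ℕ) (α : Fin k → ℂ) (θ : Fin k → ℝ) (u : ℕ → ℝ)
    (hu : ∀ n : ℕ, (u n : ℂ) = ∑ j, α j * Complex.exp (Complex.I * n * (θ j : ℂ))) :
    ∀ ε > 0, ∀ j N : ℕ, ∃ n > N, |u n - u j| < ε := by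
  intro ε hε j0 N
  set A : ℝ := ∑ j, ‖α j‖ with hA
  have hA0 : 0 ≤ A := Finset.sum_nonneg fun j _ => norm_nonneg _
  set δ : ℝ := ε / (A + 1) with hδ
  have hδpos : 0 < δ := div_pos hε (by linarith)
  set g : ℕ → Fin k → ℂ := fun n j => Complex.exp (Complex.I * n * θ j) with hg
  have hcomp : IsCompact (Set.univ.pi fun _ : Fin k => Metric.sphere (0 : ℂ) 1) :=
    isCompact_univ_pi fun _ => isCompact_sphere 0 1
  have hmem : ∀ n, g n ∈ Set.univ.pi fun _ : Fin k => Metric.sphere (0 : ℂ) 1 := by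
    intro n j _
    simp only [Metric.mem_sphere, Complex.dist_eq, sub_zero, hg]
    exact abs_exp_nat_mul n (θ j)
  obtain ⟨a, -, φ, hφ, hconv⟩ := hcomp.tendsto_subseq hmem
  rw [Metric.tendsto_atTop] at hconv
  obtain ⟨M, hM⟩ := hconv (δ / 2) (by linarith)
  set q : ℕ := max M (φ M + N + 1) with hq
  have hq1 : M ≤ q := le_max_left _ _
  have hq2 : φ M + N + 1 ≤ φ q := le_trans (le_max_right _ _) hφ.le_apply
  set m : ℕ := φ q - φ M with hm
  have hmN : N < m := by omega
  have hφq : φ q = φ M + m := by omega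
  have hd : dist (g (φ q)) (g (φ M)) < δ := by
    have h1 := hM q hq1
    have h2 := hM M le_rfl
    simp only [Function.comp] at h1 h2
    calc dist (g (φ q)) (g (φ M)) ≤ dist (g (φ q)) a + dist a (g (φ M)) := dist_triangle _ _ _
      _ < δ / 2 + δ / 2 := by rw [dist_comm a]; exact add_lt_add h1 h2
      _ = δ := by ring
  -- key : |exp(I m θ_j) - 1| < δ for all j
  have key : ∀ j : Fin k, ‖Complex.exp (Complex.I * m * θ j) - 1‖ < δ := by
    intro j
    have h1 : dist (g (φ q) j) (g (φ M) j) ≤ dist (g (φ q)) (g (φ M)) := dist_le_pi_dist _ _ j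
    have h2 : dist (g (φ q) j) (g (φ M) j)
        = ‖Complex.exp (Complex.I * m * θ j) - 1‖ := by
      rw [Complex.dist_eq]
      simp only [hg]
      rw [hφq]
      exact abs_exp_diff (φ M) m (θ j)
    rw [h2] at h1
    exact lt_of_le_of_lt h1 hd
  refine ⟨j0 + m, by omega, ?_⟩
  have habs' : |u (j0 + m) - u j0|
      = ‖((u (j0 + m) : ℝ) : ℂ) - ((u j0 : ℝ) : ℂ)‖ := by
    rw [← Complex.ofReal_sub, Complex.norm_real, Real.norm_eq_abs]
  rw [habs', hu, hu, ← Finset.sum_sub_distrib]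
  have hterm : ∀ j : Fin k,
      ‖α j * Complex.exp (Complex.I * ((j0 + m : ℕ) : ℂ) * θ j)
        - α j * Complex.exp (Complex.I * (j0 : ℕ) * θ j)‖ ≤ ‖α j‖ * δ := by
    intro j
    rw [← mul_sub, norm_mul]
    have h2 : ‖Complex.exp (Complex.I * ((j0 + m : ℕ) : ℂ) * θ j)
        - Complex.exp (Complex.I * (j0 : ℕ) * θ j)‖
        = ‖Complex.exp (Complex.I * m * θ j) - 1‖ := abs_exp_diff j0 m (θ j)
    rw [h2]
    exact mul_le_mul_of_nonneg_left (le_of_lt (key j)) (norm_nonneg _)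
  calc ‖∑ j, (α j * Complex.exp (Complex.I * ((j0 + m : ℕ) : ℂ) * θ j)
          - α j * Complex.exp (Complex.I * (j0 : ℕ) * θ j))‖
      ≤ ∑ j, ‖α j * Complex.exp (Complex.I * ((j0 + m : ℕ) : ℂ) * θ j)
          - α j * Complex.exp (Complex.I * (j0 : ℕ) * θ j)‖ := norm_sum_le _ _
    _ ≤ ∑ j, ‖α j‖ * δ := Finset.sum_le_sum fun j _ => hterm j
    _ = A * δ := by rw [← Finset.sum_mul]
    _ = (A / (A + 1)) * ε := by rw [hδ]; ring
    _ < 1 * ε := by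
        apply mul_lt_mul_of_pos_right _ hε
        rw [div_lt_one (by linarith : (0 : ℝ) < A + 1)]
        linarith
    _ = ε := one_mul ε
end
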